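/- For Re(s) > 1, the double series ∑_{k=1}^∞ ∑_{p prime} ∑_{m=1}^∞ |μ(k)| p^(-mk·Re(s)) / (km) converges, justifying the rearrangement in the Möbius inversion formula for the prime zeta function. -/
import Mathlib


open ArithmeticFunction

lemma aux_summable_pnat_two : Summable (fun k : ℕ+ => (2 : ℝ) ^ (-((k : ℝ) - 1))) := by
  have hN : Summable (fun n : ℕ => (2 : ℝ) ^ (-((n : ℝ) - 1))) := by
    have : (fun n : ℕ => (2 : ℝ) ^ (-((n : ℝ) - 1))) = fun n : ℕ => 2 * (2⁻¹ : ℝ) ^ n := by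
      funext n
      rw [show -((n : ℝ) - 1) = 1 + (-n : ℝ) by ring, Real.rpow_add (by norm_num),
        Real.rpow_one, Real.rpow_neg (by norm_num), Real.rpow_natCast, inv_pow]
    rw [this]
    exact (summable_geometric_of_lt_one (by norm_num) (by norm_num)).mul_left 2
  exact hN.comp_injective (fun a b h => PNat.coe_injective (by exact_mod_cast h))

/-- **Absolute convergence of the triple series in the Möbius inversion for the
prime zeta function.** For `Re(s) > 1`, the series
`∑_k ∑_p ∑_m |μ(k)| p^{-mk Re(s)} / (km)` converges. -/
theorem moebius_inversion_triple_series_summable (s : ℂ) (hs : 1 < s.re) :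
    Summable (fun x : ℕ+ × Nat.Primes × ℕ+ =>
      (|(moebius (x.1 : ℕ) : ℤ)| : ℝ)
        * (x.2.1 : ℝ) ^ (-((x.2.2 : ℝ) * (x.1 : ℝ) * s.re))
        / ((x.1 : ℝ) * (x.2.2 : ℝ))) := by
  set sig := s.re with hsig
  -- the majorant
  have hP : Summable (fun p : Nat.Primes => (p : ℝ) ^ (-sig)) :=
    Nat.Primes.summable_rpow.mpr (by linarith)
  have hK := aux_summable_pnat_two
  have hmaj : Summable (fun x : ℕ+ × Nat.Primes × ℕ+ =>
      (2 : ℝ) ^ (-((x.1 : ℝ) - 1)) *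
        ((x.2.1 : ℝ) ^ (-sig) * (2 : ℝ) ^ (-((x.2.2 : ℝ) - 1)))) := by
    refine hK.mul_of_nonneg (hP.mul_of_nonneg hK ?_ ?_) ?_ ?_ <;>
      intro y <;> positivity
  refine hmaj.of_nonneg_of_le (fun x => ?_) (fun x => ?_)
  · positivity
  · obtain ⟨k, p, m⟩ := x
    have hk1 : (1 : ℝ) ≤ (k : ℝ) := by exact_mod_cast k.one_le
    have hm1 : (1 : ℝ) ≤ (m : ℝ) := by exact_mod_cast m.one_le
    have hp2 : (2 : ℝ) ≤ (p : ℝ) := by exact_mod_cast p.2.two_le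
    have hp0 : (0 : ℝ) < (p : ℝ) := by linarith
    have hμ : (|(moebius (k : ℕ) : ℤ)| : ℝ) ≤ 1 := by
      exact_mod_cast (abs_moebius_le_one : |moebius (k : ℕ)| ≤ 1)
    have hμ0 : (0 : ℝ) ≤ (|(moebius (k : ℕ) : ℤ)| : ℝ) := by positivity
    -- Step 1: drop |μ| and the denominator
    have step1 : (|(moebius (k : ℕ) : ℤ)| : ℝ)
        * (p : ℝ) ^ (-((m : ℝ) * (k : ℝ) * sig)) / ((k : ℝ) * (m : ℝ))
        ≤ (p : ℝ) ^ (-((m : ℝ) * (k : ℝ) * sig)) := by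
      have hkm : (1 : ℝ) ≤ (k : ℝ) * (m : ℝ) := by nlinarith
      have hA : (0 : ℝ) ≤ (p : ℝ) ^ (-((m : ℝ) * (k : ℝ) * sig)) := by positivity
      calc (|(moebius (k : ℕ) : ℤ)| : ℝ)
            * (p : ℝ) ^ (-((m : ℝ) * (k : ℝ) * sig)) / ((k : ℝ) * (m : ℝ))
          ≤ (|(moebius (k : ℕ) : ℤ)| : ℝ)
            * (p : ℝ) ^ (-((m : ℝ) * (k : ℝ) * sig)) / 1 := by
            apply div_le_div_of_nonneg_left _ (by norm_num) hkm
            · positivity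
        _ = (|(moebius (k : ℕ) : ℤ)| : ℝ)
            * (p : ℝ) ^ (-((m : ℝ) * (k : ℝ) * sig)) := by ring
        _ ≤ 1 * (p : ℝ) ^ (-((m : ℝ) * (k : ℝ) * sig)) := by
            exact mul_le_mul_of_nonneg_right hμ hA
        _ = (p : ℝ) ^ (-((m : ℝ) * (k : ℝ) * sig)) := by ring
    -- Step 2: split off p^{-sig} and bound the rest by powers of 2
    have hmk : (1 : ℝ) ≤ (m : ℝ) * (k : ℝ) := by nlinarith
    have ht0 : (0 : ℝ) ≤ (m : ℝ) * (k : ℝ) * sig - sig := by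
      nlinarith [mul_nonneg (sub_nonneg.2 hmk) (by linarith : (0:ℝ) ≤ sig)]
    have split : (p : ℝ) ^ (-((m : ℝ) * (k : ℝ) * sig))
        = (p : ℝ) ^ (-sig) * (p : ℝ) ^ (-((m : ℝ) * (k : ℝ) * sig - sig)) := by
      rw [← Real.rpow_add hp0]; ring_nf
    have hbase : (p : ℝ) ^ (-((m : ℝ) * (k : ℝ) * sig - sig))
        ≤ (2 : ℝ) ^ (-((m : ℝ) * (k : ℝ) * sig - sig)) := by
      rw [Real.rpow_neg hp0.le, Real.rpow_neg (by norm_num)]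
      exact inv_anti₀ (Real.rpow_pos_of_pos (by norm_num) _)
        (Real.rpow_le_rpow (by norm_num) hp2 ht0)
    have hexp : (2 : ℝ) ^ (-((m : ℝ) * (k : ℝ) * sig - sig))
        ≤ (2 : ℝ) ^ (-((k : ℝ) - 1) + -((m : ℝ) - 1)) := by
      apply Real.rpow_le_rpow_of_exponent_le (by norm_num)
      have hA : (0 : ℝ) ≤ (m : ℝ) * (k : ℝ) - 1 := by linarith
      have hB : ((m : ℝ) * (k : ℝ) - 1) * 1 ≤ ((m : ℝ) * (k : ℝ) - 1) * sig :=
        mul_le_mul_of_nonneg_left (by linarith) hA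
      have hC : (0 : ℝ) ≤ ((k : ℝ) - 1) * ((m : ℝ) - 1) :=
        mul_nonneg (by linarith) (by linarith)
      linarith [hB, hC]
    calc (|(moebius (k : ℕ) : ℤ)| : ℝ)
          * (p : ℝ) ^ (-((m : ℝ) * (k : ℝ) * sig)) / ((k : ℝ) * (m : ℝ))
        ≤ (p : ℝ) ^ (-((m : ℝ) * (k : ℝ) * sig)) := step1
      _ = (p : ℝ) ^ (-sig) * (p : ℝ) ^ (-((m : ℝ) * (k : ℝ) * sig - sig)) := split
      _ ≤ (p : ℝ) ^ (-sig) * (2 : ℝ) ^ (-((k : ℝ) - 1) + -((m : ℝ) - 1)) := by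
          refine mul_le_mul_of_nonneg_left (hbase.trans hexp) (by positivity)
      _ = (2 : ℝ) ^ (-((k : ℝ) - 1)) *
            ((p : ℝ) ^ (-sig) * (2 : ℝ) ^ (-((m : ℝ) - 1))) := by
          rw [Real.rpow_add (by norm_num)]; ring
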